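/- arXiv:1206.5383 — 7 statements merged into one kernel-verified Lean document; each statement's English description precedes it below -/
import Mathlib

section
/- For integers n ≥ 3 and 0 ≤ a < b ≤ m := n with b - a ≥ n/3 - 1 (real inequality), the closed integer interval [a, b] contains an integer of the form 2^k or of the form n - 2^k for some natural number k. -/
lemma pow_two_mem_interval (x y : ℤ) (hy : 1 ≤ y) (h : 2 * x - 1 ≤ y) :
    ∃ k : ℕ, x ≤ 2 ^ k ∧ 2 ^ k ≤ y := by
  by_cases hx : x ≤ 1
  · exact ⟨0, by simpa using hx, by simpa using hy⟩
  push_neg at hx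
  set m := y.toNat with hm
  have hym : (m : ℤ) = y := Int.toNat_of_nonneg (by linarith)
  have hm0 : m ≠ 0 := by omega
  set k := Nat.log 2 m with hk
  have h1 : (2 : ℤ) ^ k ≤ y := by
    have := Nat.pow_log_le_self 2 hm0
    have : (2 ^ k : ℤ) ≤ (m : ℤ) := by exact_mod_cast this
    omega
  have h2 : y < 2 ^ (k + 1) := by
    have := Nat.lt_pow_succ_log_self (by norm_num : 1 < 2) m
    have : (m : ℤ) < 2 ^ (k + 1) := by exact_mod_cast this
    omega
  refine ⟨k, ?_, h1⟩
  by_contra hlt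
  push_neg at hlt
  have : (2 : ℤ) ^ (k + 1) = 2 * 2 ^ k := by ring
  omega

theorem interval_contains_power_of_two_or_complement
    (n a b : ℤ) (hn : 3 ≤ n) (ha : 0 ≤ a) (hab : a < b) (hb : b ≤ n)
    (hlen : ((b : ℝ) - a) ≥ (n : ℝ) / 3 - 1) :
    ∃ (k : ℕ) (c : ℤ), a ≤ c ∧ c ≤ b ∧ (c = 2 ^ k ∨ c = n - 2 ^ k) := by
  by_cases h1 : 2 * a - 1 ≤ b
  · obtain ⟨k, hk1, hk2⟩ := pow_two_mem_interval a b (by linarith) h1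
    exact ⟨k, 2 ^ k, hk1, hk2, Or.inl rfl⟩
  by_cases h2 : 2 * (n - b) - 1 ≤ n - a
  · obtain ⟨k, hk1, hk2⟩ := pow_two_mem_interval (n - b) (n - a) (by linarith) h2
    exact ⟨k, n - 2 ^ k, by linarith, by linarith, Or.inr rfl⟩
  exfalso
  push_neg at h1 h2
  have h1' : (b : ℝ) ≤ 2 * a - 2 := by exact_mod_cast (by omega : b ≤ 2 * a - 2)
  have h2' : ((n : ℝ) - a) ≤ 2 * (n - b) - 2 := by
    exact_mod_cast (by omega : n - a ≤ 2 * (n - b) - 2)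
  linarith
end

section
/- Let 2 ≤ M be an odd integer and K ≥ 2 an integer with 3K ≥ M, and let 0 ≤ S < M be an integer. Then there exists an integer s with max(S,1) ≤ s < min(S + K, M) and gcd(s, M) = 1. -/
lemma exists_pow_two_between (n : ℤ) (hn : 1 ≤ n) :
    ∃ b : ℕ, n < 2 ^ b ∧ (2:ℤ) ^ b ≤ 2 * n := by
  set m := n.toNat with hm
  have hmn : (m : ℤ) = n := Int.toNat_of_nonneg (by omega)
  have hm1 : m ≠ 0 := by omega
  refine ⟨Nat.log 2 m + 1, ?_, ?_⟩
  · have := Nat.lt_pow_succ_log_self (by norm_num : 1 < 2) m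
    have : (m : ℤ) < 2 ^ (Nat.log 2 m + 1) := by exact_mod_cast this
    omega
  · have := Nat.pow_log_le_self 2 hm1
    have h2 : (2:ℤ) ^ Nat.log 2 m ≤ m := by exact_mod_cast this
    rw [pow_succ, mul_comm]
    omega

lemma pow_two_coprime (M : ℤ) (hModd : Odd M) (b : ℕ) : IsCoprime ((2:ℤ) ^ b) M := by
  apply IsCoprime.pow_left
  rw [Int.prime_two.coprime_iff_not_dvd]
  rw [Int.odd_iff] at hModd
  omega

theorem exists_coprime_in_interval
    (M K S : ℤ) (hM : 2 ≤ M) (hModd : Odd M) (hK : 2 ≤ K) (hKM : 3 * K ≥ M)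
    (hS : 0 ≤ S) (hSM : S < M) :
    ∃ s : ℤ, max S 1 ≤ s ∧ s < min (S + K) M ∧ Int.gcd s M = 1 := by
  rcases le_or_gt M (S + K) with hMSK | hMSK
  · -- s = M - 1
    refine ⟨M - 1, ?_, ?_, ?_⟩
    · simp only [max_le_iff]; omega
    · simp only [lt_min_iff]; omega
    · rw [← Int.isCoprime_iff_gcd_eq_one]
      have : IsCoprime (-1 + M * 1) M := (isCoprime_one_left (x := M)).neg_left.add_mul_left_left 1
      simpa [neg_add_eq_sub] using this
  · rcases eq_or_lt_of_le hS with hS0 | hS1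
    · -- S = 0, s = 1
      refine ⟨1, ?_, ?_, ?_⟩
      · simp only [max_le_iff]; omega
      · simp only [lt_min_iff]; omega
      · simp
    · rcases lt_or_ge S K with hSK | hSK
      · -- power of 2 in (S, 2S]
        obtain ⟨b, hb1, hb2⟩ := exists_pow_two_between S (by omega)
        refine ⟨2 ^ b, ?_, ?_, ?_⟩
        · simp only [max_le_iff]; omega
        · simp only [lt_min_iff]; omega
        · rw [← Int.isCoprime_iff_gcd_eq_one]; exact pow_two_coprime M hModd b
      · -- s = M - 2^b with M-S-K < 2^b ≤ 2(M-S-K)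
        obtain ⟨b, hb1, hb2⟩ := exists_pow_two_between (M - S - K) (by omega)
        refine ⟨M - 2 ^ b, ?_, ?_, ?_⟩
        · simp only [max_le_iff]; omega
        · simp only [lt_min_iff]
          have : (0:ℤ) < 2 ^ b := by positivity
          omega
        · rw [← Int.isCoprime_iff_gcd_eq_one]
          have h := (pow_two_coprime M hModd b).neg_left
          have : IsCoprime (-(2:ℤ) ^ b + M * 1) M := h.add_mul_left_left 1
          simpa [neg_add_eq_sub] using this
end

section
/- For integers k ≥ 1, m ≥ 1, and 0 ≤ s < m, the following are equivalent: (a) there exist integers n ≥ 1 and x ≥ 0 with m = k·n, s = k·x, x < n, and n dividing x² + x + 1; (b) k = gcd(s, m) (with the convention gcd(0,m) = m) and there exists an integer b with 0 < b ≤ m/k, b·s ≡ −k (mod m), and s = b·k − k. -/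
theorem one_point_orbit_arith_characterization
    (k m s : ℤ) (hk : 1 ≤ k) (hm : 1 ≤ m) (hs : 0 ≤ s) (hsm : s < m) :
    (∃ n x : ℤ, 1 ≤ n ∧ 0 ≤ x ∧ m = k * n ∧ s = k * x ∧ x < n ∧ n ∣ x ^ 2 + x + 1)
      ↔
    (k = (Int.gcd s m : ℤ) ∧
      ∃ b : ℤ, 0 < b ∧ b ≤ m / k ∧ m ∣ b * s + k ∧ s = b * k - k) := by
  have hk0 : k ≠ 0 := by omega
  constructor
  · rintro ⟨n, x, hn, hx, hmn, hsx, hxn, hdvd⟩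
    have hcop : Int.gcd x n = 1 := by
      rw [← Int.isCoprime_iff_gcd_eq_one]
      obtain ⟨c, hc⟩ := hdvd
      exact ⟨-(x + 1), c, by linear_combination -hc⟩
    constructor
    · rw [hsx, hmn, Int.gcd_mul_left, hcop]
      simp [abs_of_pos (by omega : (0:ℤ) < k)]
    · refine ⟨x + 1, by omega, ?_, ?_, by linarith [hsx]⟩
      · rw [hmn, Int.mul_ediv_cancel_left _ hk0]; omega
      · obtain ⟨c, hc⟩ := hdvd
        exact ⟨c, by rw [hsx, hmn]; linear_combination k * hc⟩
  · rintro ⟨hgcd, b, hb0, hbn, hdvd, hsb⟩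
    have hks : k ∣ s := hgcd ▸ Int.gcd_dvd_left s m
    have hkm : k ∣ m := hgcd ▸ Int.gcd_dvd_right s m
    obtain ⟨n, hn⟩ := hkm
    have hn1 : 1 ≤ n := by nlinarith
    refine ⟨n, b - 1, hn1, by omega, hn, by linarith, ?_, ?_⟩
    · have : b ≤ n := by
        rwa [hn, Int.mul_ediv_cancel_left _ hk0] at hbn
      omega
    · have h1 : k * n ∣ k * ((b - 1) ^ 2 + (b - 1) + 1) := by
        rw [← hn]
        have : b * s + k = k * ((b - 1) ^ 2 + (b - 1) + 1) := by
          linear_combination b * hsb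
        exact this ▸ hdvd
      exact (mul_dvd_mul_iff_left hk0).mp h1
end

section
/- The set of pairs of positive integers (x, y) satisfying x² + x + 1 = 3·y² is infinite. -/
private def ssStep (p : ℤ × ℤ) : ℤ × ℤ := (7 * p.1 + 12 * p.2 + 3, 4 * p.1 + 7 * p.2 + 2)

private def ssF (n : ℕ) : ℤ × ℤ := ssStep^[n] (1, 1)

private lemma ssF_mem (n : ℕ) : 0 < (ssF n).1 ∧ 0 < (ssF n).2 ∧
    (ssF n).1 ^ 2 + (ssF n).1 + 1 = 3 * (ssF n).2 ^ 2 := by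
  induction n with
  | zero => simp [ssF]
  | succ n ih =>
    obtain ⟨hx, hy, he⟩ := ih
    have : ssF (n + 1) = ssStep (ssF n) := by
      simp [ssF, Function.iterate_succ_apply']
    rw [this]
    refine ⟨by simp [ssStep]; linarith, by simp [ssStep]; linarith, ?_⟩
    simp only [ssStep]
    ring_nf
    ring_nf at he
    linarith

private lemma ssF_strictMono : StrictMono (fun n => (ssF n).1) := by
  apply strictMono_nat_of_lt_succ
  intro n
  obtain ⟨hx, hy, _⟩ := ssF_mem n
  have : ssF (n + 1) = ssStep (ssF n) := by
    simp [ssF, Function.iterate_succ_apply']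
  rw [this]
  simp only [ssStep]
  linarith

theorem infinite_solutions_schinzel_sierpinski :
    {p : ℤ × ℤ | 0 < p.1 ∧ 0 < p.2 ∧ p.1 ^ 2 + p.1 + 1 = 3 * p.2 ^ 2}.Infinite := by
  apply Set.infinite_of_injective_forall_mem (f := ssF)
  · intro a b hab
    exact ssF_strictMono.injective (congrArg Prod.fst hab)
  · exact ssF_mem
end

section
/- Let f'_3, f'_4, f'_5, f'_6, f''_3, f''_4, f''_5, f''_6 be nonnegative integers (counts of vertices of each degree in the two end-trees) satisfying the Tutte identity Σ_{i=3}^{6} (i−2)·f'_i = Σ_{i=3}^{6} (i−2)·f''_i and the Euler identity Σ_{i=3}^{5} (6−i)·(f'_i + f''_i) = 12. Then |Σ_{i=3}^{6} f''_i − Σ_{i=3}^{6} f'_i| ≤ 3. -/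
theorem end_trees_orders_differ_by_at_most_three
    (f3' f4' f5' f6' f3'' f4'' f5'' f6'' : ℤ)
    (h3' : 0 ≤ f3') (h4' : 0 ≤ f4') (h5' : 0 ≤ f5') (h6' : 0 ≤ f6')
    (h3'' : 0 ≤ f3'') (h4'' : 0 ≤ f4'') (h5'' : 0 ≤ f5'') (h6'' : 0 ≤ f6'')
    (hTutte : 1 * f3' + 2 * f4' + 3 * f5' + 4 * f6'
            = 1 * f3'' + 2 * f4'' + 3 * f5'' + 4 * f6'')
    (hEuler : 3 * (f3' + f3'') + 2 * (f4' + f4'') + 1 * (f5' + f5'') = 12) :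
    |(f3'' + f4'' + f5'' + f6'') - (f3' + f4' + f5' + f6')| ≤ 3 := by
  rw [abs_le]; omega
end

section
/- Let 0 ≤ s < m be integers with m ≥ 1, let d = gcd(s, m) (with gcd(0, m) = m), and suppose a, b are positive integers with a·m − b·s = d and b ≤ m/d. If s' = s/d', m' = m/d' where d' = gcd(s,m) puts s/m in lowest terms, then s'/m' < a/b are consecutive fractions in the Farey sequence of order m'. -/
/-- A rational `q` belongs to the Farey sequence of order `n`:
it lies in `[0,1]` and has denominator at most `n`. -/
def InFarey (n : ℕ) (q : ℚ) : Prop := 0 ≤ q ∧ q ≤ 1 ∧ q.den ≤ n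

/-- `p` and `q` are consecutive fractions (neighbors) in the Farey sequence of
order `n`: both belong to it, `p < q`, and no member lies strictly between. -/
def FareyNeighbors (n : ℕ) (p q : ℚ) : Prop :=
  InFarey n p ∧ InFarey n q ∧ p < q ∧ ∀ r : ℚ, InFarey n r → ¬(p < r ∧ r < q)

private lemma frac_lt_rat_aux (x y : ℤ) (hy : 0 < y) (r : ℚ)
    (h : (x:ℚ)/y < r) : (x:ℚ)/y + 1/((r.den:ℚ)*y) ≤ r := by
  have hden : (0:ℚ) < (r.den:ℚ) := by exact_mod_cast r.pos
  have hyq : (0:ℚ) < (y:ℚ) := by exact_mod_cast hy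
  rw [← Rat.num_div_den r, div_lt_div_iff₀ hyq hden] at h
  have hnum1 : x * (r.den:ℤ) + 1 ≤ r.num * y := by exact_mod_cast h
  have hnumq : (x:ℚ) * r.den + 1 ≤ (r.num:ℚ) * y := by exact_mod_cast hnum1
  have key : (x:ℚ)/y + 1/((r.den:ℚ)*y) ≤ (r.num:ℚ)/(r.den:ℚ) := by
    rw [div_add_div _ _ (ne_of_gt hyq) (ne_of_gt (mul_pos hden hyq)),
      div_le_div_iff₀ (by positivity) hden]
    nlinarith [mul_le_mul_of_nonneg_right hnumq (mul_pos hden hyq).le]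
  rwa [Rat.num_div_den] at key

private lemma rat_lt_frac_aux (x y : ℤ) (hy : 0 < y) (r : ℚ)
    (h : r < (x:ℚ)/y) : r + 1/((r.den:ℚ)*y) ≤ (x:ℚ)/y := by
  have hden : (0:ℚ) < (r.den:ℚ) := by exact_mod_cast r.pos
  have hyq : (0:ℚ) < (y:ℚ) := by exact_mod_cast hy
  rw [← Rat.num_div_den r, div_lt_div_iff₀ hden hyq] at h
  have hnum1 : r.num * y + 1 ≤ x * (r.den:ℤ) := by exact_mod_cast h
  have hnumq : (r.num:ℚ) * y + 1 ≤ (x:ℚ) * r.den := by exact_mod_cast hnum1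
  have key : (r.num:ℚ)/(r.den:ℚ) + 1/((r.den:ℚ)*y) ≤ (x:ℚ)/y := by
    rw [div_add_div _ _ (ne_of_gt hden) (ne_of_gt (mul_pos hden hyq)),
      div_le_div_iff₀ (by positivity) hyq]
    nlinarith [mul_le_mul_of_nonneg_right hnumq (mul_pos hden hyq).le]
  rwa [Rat.num_div_den] at key

theorem farey_neighbors_of_gcd_relation
    (s m a b : ℤ) (hm : 1 ≤ m) (hs : 0 ≤ s) (hsm : s < m)
    (ha : 0 < a) (hb : 0 < b)
    (hd : a * m - b * s = (Int.gcd s m : ℤ))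
    (hbm : b ≤ m / (Int.gcd s m : ℤ)) :
    FareyNeighbors (m / (Int.gcd s m : ℤ)).toNat
      ((s : ℚ) / (m : ℚ)) ((a : ℚ) / (b : ℚ)) := by
  set d : ℤ := (Int.gcd s m : ℤ) with hd_def
  have hd0 : 0 < d := by
    have hmne : m ≠ 0 := by omega
    have := Int.gcd_pos_of_ne_zero_right s hmne
    rw [hd_def]; exact_mod_cast this
  obtain ⟨m0, hm0⟩ : d ∣ m := Int.gcd_dvd_right s m
  obtain ⟨s0, hs0⟩ : d ∣ s := Int.gcd_dvd_left s m
  have hmd : m / d = m0 := by rw [hm0]; exact Int.mul_ediv_cancel_left _ (ne_of_gt hd0)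
  have hm0pos : 0 < m0 := by nlinarith
  have hs0nn : 0 ≤ s0 := by nlinarith
  have hs0m0 : s0 < m0 := by nlinarith
  have hbm0 : b ≤ m0 := hmd ▸ hbm
  -- reduced relation
  have hrel : a * m0 - b * s0 = 1 := by
    have : d * (a * m0 - b * s0) = d * 1 := by rw [hm0, hs0] at hd; ring_nf; ring_nf at hd; linarith
    exact mul_left_cancel₀ (ne_of_gt hd0) this
  have hab : a ≤ b := by nlinarith
  -- rational equalities
  have hm0q : (0:ℚ) < (m0:ℚ) := by exact_mod_cast hm0pos
  have hbq : (0:ℚ) < (b:ℚ) := by exact_mod_cast hb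
  have hdq : (0:ℚ) < (d:ℚ) := by exact_mod_cast hd0
  have hsm_eq : (s:ℚ)/(m:ℚ) = (s0:ℚ)/(m0:ℚ) := by
    rw [hs0, hm0]; push_cast; rw [mul_div_mul_left _ _ (ne_of_gt hdq)]
  have hkey : (a:ℚ)/(b:ℚ) = (s0:ℚ)/(m0:ℚ) + 1/((b:ℚ)*(m0:ℚ)) := by
    have hq : (a:ℚ) * m0 = s0 * b + 1 := by exact_mod_cast (by linarith : a * m0 = s0 * b + 1)
    field_simp
    linear_combination hq
  have hlt : (s:ℚ)/(m:ℚ) < (a:ℚ)/(b:ℚ) := by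
    rw [hsm_eq, hkey]
    have : (0:ℚ) < 1/((b:ℚ)*(m0:ℚ)) := by positivity
    linarith
  -- membership of s/m
  have htoNat : ((m / d).toNat : ℤ) = m0 := by rw [hmd]; exact Int.toNat_of_nonneg (le_of_lt hm0pos)
  have hden_sm : (((s:ℚ)/(m:ℚ)).den : ℤ) ≤ m0 := by
    rw [hsm_eq]
    have hdvd : (((s0:ℚ)/(m0:ℚ)).den : ℤ) ∣ m0 := by
      have := Rat.den_dvd s0 m0
      rwa [Rat.divInt_eq_div] at this
    exact Int.le_of_dvd hm0pos hdvd
  have hden_ab : (((a:ℚ)/(b:ℚ)).den : ℤ) ≤ m0 := by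
    have hdvd : (((a:ℚ)/(b:ℚ)).den : ℤ) ∣ b := by
      have := Rat.den_dvd a b
      rwa [Rat.divInt_eq_div] at this
    exact le_trans (Int.le_of_dvd hb hdvd) hbm0
  refine ⟨⟨by positivity, ?_, ?_⟩, ⟨by positivity, ?_, ?_⟩, hlt, ?_⟩
  · rw [hsm_eq, div_le_one hm0q]; exact_mod_cast le_of_lt hs0m0
  · omega
  · rw [div_le_one hbq]; exact_mod_cast hab
  · omega
  · rintro r ⟨_, _, hrden⟩ ⟨h1, h2⟩
    have hq : ((r.den : ℤ)) ≤ m0 := by omega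
    have hqpos : (0:ℚ) < (r.den:ℚ) := by exact_mod_cast r.pos
    have hqm : (0:ℚ) < (m0:ℚ) := hm0q
    rw [hsm_eq] at h1
    have H1 : (s0:ℚ)/m0 + 1/((r.den:ℚ)*m0) ≤ r := frac_lt_rat_aux s0 m0 hm0pos r h1
    have H2 : r + 1/((r.den:ℚ)*b) ≤ (a:ℚ)/b := rat_lt_frac_aux a b hb r h2
    have hqle : (r.den:ℚ) ≤ (m0:ℚ) := by exact_mod_cast hq
    have : 1/((r.den:ℚ)*m0) + 1/((r.den:ℚ)*b) ≤ 1/((b:ℚ)*m0) := by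
      rw [hkey] at H2; linarith
    have c1 : 1/((b:ℚ)*m0) < 1/((r.den:ℚ)*m0) + 1/((r.den:ℚ)*b) := by
      rw [div_add_div _ _ (by positivity) (by positivity), div_lt_div_iff₀ (by positivity) (by positivity)]
      push_cast
      nlinarith [mul_lt_mul_of_pos_right (show (r.den:ℚ) < (b:ℚ) + (m0:ℚ) by linarith)
        (show (0:ℚ) < (r.den:ℚ) * b * m0 by positivity)]
    linarith
end

section
/- Define the orbit map Φ on X = {(k, m, s) ∈ ℤ³ : k ≥ 1, m ≥ 1, 0 ≤ s < m} as above. Then (k, m, s) ∈ X is a fixed point of Φ if and only if there exist integers n ≥ 1 and 0 ≤ x < n with m = k·n, s = k·x, and n dividing x² + x + 1. -/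
/-- `OrbitStep k m s k' m' s'` says that the orbit map of the paper sends the
index-vector `(k, m, s)` to `(k', m', s')`:
`k' = gcd(s, m)` (with `gcd 0 m = m`), `k' * m' = k * m`, `0 ≤ s' < m'`, and
`s' ≡ b*k - k' (mod m')` where `b` is the unique integer with `0 < b ≤ m / k'`
and `b*s ≡ -k' (mod m)`. -/
def OrbitStep (k m s k' m' s' : ℤ) : Prop :=
  k' = (Int.gcd s m : ℤ) ∧ k' * m' = k * m ∧ 0 ≤ s' ∧ s' < m' ∧
    ∃ b : ℤ, 0 < b ∧ b ≤ m / k' ∧ m ∣ b * s + k' ∧ m' ∣ s' - (b * k - k')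

theorem fixed_point_orbit_characterization
    (k m s : ℤ) (hk : 1 ≤ k) (hm : 1 ≤ m) (hs : 0 ≤ s) (hsm : s < m) :
    OrbitStep k m s k m s ↔
      ∃ n x : ℤ, 1 ≤ n ∧ 0 ≤ x ∧ x < n ∧ m = k * n ∧ s = k * x ∧
        n ∣ x ^ 2 + x + 1 := by
  have hk0 : (0:ℤ) < k := by linarith
  constructor
  · rintro ⟨hgcd, -, -, -, b, hb0, hbn, hdvd1, hdvd2⟩
    have hks : k ∣ s := hgcd ▸ Int.gcd_dvd_left s m
    have hkm : k ∣ m := hgcd ▸ Int.gcd_dvd_right s m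
    obtain ⟨x, hx⟩ := hks
    obtain ⟨n, hn⟩ := hkm
    have hn1 : 1 ≤ n := by nlinarith
    have hx0 : 0 ≤ x := by nlinarith
    have hxn : x < n := by
      by_contra h
      push_neg at h
      nlinarith
    -- n ∣ b*x + 1
    have h1 : n ∣ b * x + 1 := by
      have : k * n ∣ k * (b * x + 1) := by
        have : k * (b * x + 1) = b * s + k := by rw [hx]; ring
        rw [this, ← hn]; exact hdvd1
      exact (mul_dvd_mul_iff_left (by positivity : (k:ℤ) ≠ 0)).mp this
    have h2 : n ∣ x - b + 1 := by
      have : k * n ∣ k * (x - b + 1) := by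
        have : k * (x - b + 1) = s - (b * k - k) := by rw [hx]; ring
        rw [this, ← hn]; exact hdvd2
      exact (mul_dvd_mul_iff_left (by positivity : (k:ℤ) ≠ 0)).mp this
    refine ⟨n, x, hn1, hx0, hxn, hn, hx, ?_⟩
    have := h1.add (h2.mul_left x)
    have heq : b * x + 1 + x * (x - b + 1) = x ^ 2 + x + 1 := by ring
    rwa [heq] at this
  · rintro ⟨n, x, hn1, hx0, hxn, hm', hs', hdvd⟩
    obtain ⟨c, hc⟩ := hdvd
    have hcop : IsCoprime x n := ⟨-(x + 1), c, by linarith [hc]⟩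
    have hgcd : k = (Int.gcd s m : ℤ) := by
      rw [hs', hm', Int.gcd_mul_left, Int.isCoprime_iff_gcd_eq_one.mp hcop]
      simp [Int.natAbs_of_nonneg hk0.le]
    refine ⟨hgcd, rfl, hs, hsm, x + 1, by linarith, ?_, ?_, ?_⟩
    · rw [hm', Int.mul_ediv_cancel_left _ (by positivity : (k:ℤ) ≠ 0)]
      linarith
    · rw [hs', hm']
      have : (x + 1) * (k * x) + k = k * (x ^ 2 + x + 1) := by ring
      rw [this]
      exact mul_dvd_mul_left k ⟨c, hc⟩
    · rw [hs']
      have : k * x - ((x + 1) * k - k) = 0 := by ring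
      rw [this]
      exact dvd_zero m
end
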